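/- Let K ⊆ ℝⁿ be a closed convex cone and x ∈ K. Then x does not belong to the relative interior of K if and only if there exists s ∈ K* with ⟨s, x⟩ = 0 and s ∉ K^⊥. -/

import Mathlib

open scoped InnerProductSpace
open Set Pointwise

/-- Metric characterization of the intrinsic interior of a set containing `0`. -/
lemma aux_mem_intrinsic {n : ℕ} (K : Set (EuclideanSpace ℝ (Fin n)))
    (h0 : (0 : EuclideanSpace ℝ (Fin n)) ∈ K) (x : EuclideanSpace ℝ (Fin n)) :
    x ∈ intrinsicInterior ℝ K ↔ x ∈ Submodule.span ℝ K ∧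
      ∃ ε > 0, ∀ z ∈ (Submodule.span ℝ K : Set (EuclideanSpace ℝ (Fin n))),
        dist z x < ε → z ∈ K := by
  have hA : (affineSpan ℝ K : Set (EuclideanSpace ℝ (Fin n)))
      = (Submodule.span ℝ K : Set (EuclideanSpace ℝ (Fin n))) := by
    rw [← affineSpan_insert_zero, Set.insert_eq_self.2 h0]
  constructor
  · rintro ⟨y, hy, rfl⟩
    have hyV : (y : EuclideanSpace ℝ (Fin n)) ∈ Submodule.span ℝ K := by
      rw [← SetLike.mem_coe, ← hA]; exact y.2
    refine ⟨hyV, ?_⟩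
    rw [mem_interior_iff_mem_nhds] at hy
    obtain ⟨y, hyA⟩ := y
    rw [nhds_subtype_eq_comap, Filter.mem_comap] at hy
    obtain ⟨t, ht, hsub⟩ := hy
    obtain ⟨ε, hε, hball⟩ := Metric.mem_nhds_iff.1 ht
    refine ⟨ε, hε, fun z hzV hdist => ?_⟩
    have hzA : z ∈ affineSpan ℝ K := by rw [← SetLike.mem_coe, hA]; exact hzV
    have : (⟨z, hzA⟩ : affineSpan ℝ K) ∈ (Subtype.val ⁻¹' t : Set (affineSpan ℝ K)) :=
      hball hdist
    exact hsub this
  · rintro ⟨hxV, ε, hε, hball⟩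
    have hxA : x ∈ affineSpan ℝ K := by rw [← SetLike.mem_coe, hA]; exact hxV
    refine ⟨⟨x, hxA⟩, ?_, rfl⟩
    rw [mem_interior_iff_mem_nhds, nhds_subtype_eq_comap, Filter.mem_comap]
    refine ⟨Metric.ball x ε, Metric.ball_mem_nhds _ hε, fun z hz => ?_⟩
    have hzV : (z : EuclideanSpace ℝ (Fin n)) ∈ Submodule.span ℝ K := by
      rw [← SetLike.mem_coe, ← hA]; exact z.2
    exact hball _ hzV hz

/-- For a closed convex cone `K` and `x ∈ K`, `x` is not in the relative
interior of `K` iff there exists `s ∈ K*` with `⟪s, x⟫ = 0` and `s ∉ K^⊥`. -/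
theorem caratheodory_stmt16 {n : ℕ} (K : Set (EuclideanSpace ℝ (Fin n)))
    (hconv : Convex ℝ K)
    (hcone : ∀ (c : ℝ), 0 ≤ c → ∀ y ∈ K, c • y ∈ K)
    (hclosed : IsClosed K)
    (x : EuclideanSpace ℝ (Fin n)) (hx : x ∈ K) :
    x ∉ intrinsicInterior ℝ K ↔
      ∃ s : EuclideanSpace ℝ (Fin n),
        (∀ y ∈ K, 0 ≤ ⟪s, y⟫_ℝ) ∧ ⟪s, x⟫_ℝ = 0 ∧ ¬(∀ y ∈ K, ⟪s, y⟫_ℝ = 0) := by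
  have h0 : (0 : EuclideanSpace ℝ (Fin n)) ∈ K := by simpa using hcone 0 le_rfl x hx
  set V : Submodule ℝ (EuclideanSpace ℝ (Fin n)) := Submodule.span ℝ K with hV
  constructor
  · -- hard direction: x not in relative interior ⇒ separating functional
    intro hni
    set C : Set (EuclideanSpace ℝ (Fin n)) := K + (Vᗮ : Set (EuclideanSpace ℝ (Fin n))) with hC
    have hKC : K ⊆ C := fun y hy => ⟨y, hy, 0, Vᗮ.zero_mem, add_zero y⟩
    have hWC : (Vᗮ : Set (EuclideanSpace ℝ (Fin n))) ⊆ C := fun w hw => ⟨0, h0, w, hw, zero_add w⟩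
    have hCconv : Convex ℝ C := hconv.add Vᗮ.convex
    -- affine span of C is everything
    have hspanC : affineSpan ℝ C = ⊤ := by
      rw [eq_top_iff]
      intro z _
      have hz : z ∈ Submodule.span ℝ C := by
        have h1 : V ≤ Submodule.span ℝ C :=
          Submodule.span_le.2 (hKC.trans Submodule.subset_span)
        have h2 : Vᗮ ≤ Submodule.span ℝ C :=
          Submodule.span_le.2 (hWC.trans Submodule.subset_span) |>.trans_eq' (Submodule.span_eq _)
        have h3 : V ⊔ Vᗮ ≤ Submodule.span ℝ C := sup_le h1 h2
        rw [Submodule.sup_orthogonal_of_hasOrthogonalProjection] at h3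
        exact h3 Submodule.mem_top
      have hAC : (affineSpan ℝ C : Set (EuclideanSpace ℝ (Fin n)))
          = (Submodule.span ℝ C : Set (EuclideanSpace ℝ (Fin n))) := by
        rw [← affineSpan_insert_zero, Set.insert_eq_self.2 (hKC h0)]
      rw [← SetLike.mem_coe, hAC]
      exact hz
    have hCint : (interior C).Nonempty := by
      rw [hCconv.interior_nonempty_iff_affineSpan_eq_top]
      exact hspanC
    -- x is not in the interior of C
    have hxni : x ∉ interior C := by
      intro hxint
      apply hni
      rw [aux_mem_intrinsic K h0 x]
      refine ⟨Submodule.subset_span hx, ?_⟩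
      obtain ⟨ε, hε, hball⟩ := Metric.isOpen_iff.1 isOpen_interior x hxint
      refine ⟨ε, hε, fun z hzV hdist => ?_⟩
      have hzC : z ∈ C := interior_subset (hball hdist)
      obtain ⟨k, hk, w, hw, hkw⟩ := hzC
      have hkw' : k + w = z := hkw
      have hwV : w ∈ V := by
        have hwe : w = z - k := by rw [← hkw']; abel
        rw [hwe]
        exact V.sub_mem hzV (Submodule.subset_span hk)
      have hw0 : w = 0 := by
        have h2 : ⟪w, w⟫_ℝ = 0 := Submodule.inner_right_of_mem_orthogonal (K := V) hwV hw
        exact inner_self_eq_zero.mp h2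
      rw [← hkw', hw0, add_zero]
      exact hk
    -- separate
    obtain ⟨f, u, hfu, hux⟩ :=
      geometric_hahn_banach_open (hCconv.interior) isOpen_interior
        (convex_singleton x) (disjoint_singleton_right.2 hxni)
    have hux : u ≤ f x := hux x rfl
    -- f ≤ u on all of C
    have hCle : ∀ y ∈ C, f y ≤ u := by
      intro y hy
      obtain ⟨z₀, hz₀⟩ := hCint
      have hseg : openSegment ℝ y z₀ ⊆ interior C :=
        hCconv.openSegment_closure_interior_subset_interior (subset_closure hy) hz₀
      have hycl : y ∈ closure (interior C) := by
        have h1 : y ∈ closure (openSegment ℝ y z₀) := by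
          rw [closure_openSegment]; exact left_mem_segment ℝ y z₀
        exact closure_mono hseg h1
      have hclosedT : IsClosed {w : EuclideanSpace ℝ (Fin n) | f w ≤ u} := isClosed_le f.continuous continuous_const
      have hsubT : interior C ⊆ {w : EuclideanSpace ℝ (Fin n) | f w ≤ u} := fun w hw => (hfu w hw).le
      exact (closure_minimal hsubT hclosedT) hycl
    -- cone argument: f ≤ 0 on K
    have hfK : ∀ y ∈ K, f y ≤ 0 := by
      intro y hy
      by_contra h
      push_neg at h
      have hu0 : 0 ≤ u := by simpa using hCle 0 (hKC h0)
      have hcy : ((u + 1) / f y) • y ∈ K := hcone _ (by positivity) y hy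
      have := hCle _ (hKC hcy)
      rw [map_smul] at this
      have : (u + 1) / f y * f y ≤ u := this
      rw [div_mul_cancel₀ _ (ne_of_gt h)] at this
      linarith
    have hfx : f x = 0 := le_antisymm (hfK x hx) (le_trans (by simpa using hCle 0 (hKC h0)) hux)
    have hu0 : 0 ≤ u := by simpa using hCle 0 (hKC h0)
    -- a point of K where f is negative
    obtain ⟨z₀, hz₀⟩ := hCint
    have hfz₀ : f z₀ < 0 := lt_of_lt_of_le (hfu z₀ hz₀) (hux.trans_eq hfx)
    obtain ⟨k, hk, w, hw, hkw⟩ := interior_subset hz₀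
    have hkw' : k + w = z₀ := hkw
    have hfw : f w = 0 := by
      by_contra h
      have hcw : ((u + 1) / f w) • w ∈ (Vᗮ : Set (EuclideanSpace ℝ (Fin n))) := Vᗮ.smul_mem _ hw
      have := hCle _ (hWC hcw)
      rw [map_smul] at this
      have : (u + 1) / f w * f w ≤ u := this
      rw [div_mul_cancel₀ _ h] at this
      linarith
    have hfk : f k < 0 := by
      have : f k + f w = f z₀ := by rw [← map_add, hkw']
      linarith [hfz₀, this, hfw]
    -- build s via Riesz representation
    refine ⟨-((InnerProductSpace.toDual ℝ (EuclideanSpace ℝ (Fin n))).symm f), ?_, ?_, ?_⟩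
    · intro y hy
      rw [inner_neg_left, InnerProductSpace.toDual_symm_apply]
      linarith [hfK y hy]
    · rw [inner_neg_left, InnerProductSpace.toDual_symm_apply, hfx, neg_zero]
    · intro hall
      have := hall k hk
      rw [inner_neg_left, InnerProductSpace.toDual_symm_apply] at this
      linarith
  · -- easy direction
    rintro ⟨s, hs1, hs2, hs3⟩ hxint
    push_neg at hs3
    obtain ⟨y, hy, hsy⟩ := hs3
    have hsy' : 0 < ⟪s, y⟫_ℝ := lt_of_le_of_ne (hs1 y hy) (Ne.symm hsy)
    rw [aux_mem_intrinsic K h0 x] at hxint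
    obtain ⟨hxV, ε, hε, hball⟩ := hxint
    set t : ℝ := ε / (2 * (‖x - y‖ + 1)) with ht
    have hxy1 : (0:ℝ) < ‖x - y‖ + 1 := by positivity
    have htpos : 0 < t := by positivity
    set z : EuclideanSpace ℝ (Fin n) := x + t • (x - y) with hz
    have hzV : z ∈ V := by
      refine V.add_mem hxV (V.smul_mem _ (V.sub_mem hxV (Submodule.subset_span hy)))
    have hdist : dist z x < ε := by
      rw [dist_eq_norm]
      have : z - x = t • (x - y) := by rw [hz]; abel
      rw [this, norm_smul, Real.norm_eq_abs, abs_of_pos htpos]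
      have h1 : t * ‖x - y‖ ≤ t * (‖x - y‖ + 1) := by nlinarith [norm_nonneg (x - y)]
      have h2 : t * (‖x - y‖ + 1) = ε / 2 := by
        rw [ht]; field_simp
      linarith
    have hzK : z ∈ K := hball z hzV hdist
    have := hs1 z hzK
    rw [hz, inner_add_right, real_inner_smul_right, inner_sub_right, hs2] at this
    nlinarith
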